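/- Let K = k1/k2 be nonzero differential-reduced with d1 = deg k1 ≥ d2 = deg k2. Then for every p ∈ E[y], deg(k2·D(p) + k1·p) = d1 + deg p, and its leading coefficient is lc(k1)·lc(p). -/

import Mathlib

open Polynomial

/-- `K = k1/k2` is differential-reduced: `gcd(k2, k1 - i·D(k2)) = 1` for all integers `i`. -/
def DiffReduced {E : Type*} [Field E] (k1 k2 : E[X]) : Prop :=
  ∀ i : ℤ, IsCoprime k2 (k1 - (i : E[X]) * derivative k2)

/-- The derivation `d/dy` on the field of rational functions `E(y)`. -/
noncomputable def Dr {E : Type*} [Field E] (f : RatFunc E) : RatFunc E :=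
  (algebraMap E[X] (RatFunc E) (derivative f.num) * algebraMap E[X] (RatFunc E) f.denom -
      algebraMap E[X] (RatFunc E) f.num * algebraMap E[X] (RatFunc E) (derivative f.denom)) /
    (algebraMap E[X] (RatFunc E) f.denom) ^ 2

theorem stmt_2 {E : Type*} [Field E] [CharZero E] (k1 k2 : E[X]) (hk1 : k1 ≠ 0)
    (hk2 : k2 ≠ 0) (hcop : IsCoprime k1 k2) (hdr : DiffReduced k1 k2)
    (hdeg : k2.natDegree ≤ k1.natDegree) (p : E[X]) (hp : p ≠ 0) :
    (k2 * derivative p + k1 * p).natDegree = k1.natDegree + p.natDegree ∧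
      (k2 * derivative p + k1 * p).leadingCoeff = k1.leadingCoeff * p.leadingCoeff := by
  have hlt : (k2 * derivative p).degree < (k1 * p).degree := by
    calc (k2 * derivative p).degree ≤ k2.degree + (derivative p).degree :=
          degree_mul_le _ _
      _ < k1.degree + p.degree := by
          apply WithBot.add_lt_add_of_le_of_lt (by simp [hk1, hk2])
            (by rw [degree_eq_natDegree hk2, degree_eq_natDegree hk1]; exact_mod_cast hdeg)
            (degree_derivative_lt hp)
      _ = (k1 * p).degree := (degree_mul).symm
  have hdeq : (k2 * derivative p + k1 * p).degree = (k1 * p).degree :=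
    degree_add_eq_right_of_degree_lt hlt
  constructor
  · have : (k2 * derivative p + k1 * p).natDegree = (k1 * p).natDegree :=
      natDegree_eq_of_degree_eq hdeq
    rw [this, natDegree_mul hk1 hp]
  · rw [leadingCoeff_add_of_degree_lt hlt, leadingCoeff_mul]
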